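/- Let 𝓡 be a finite set of closed vertical line segments in ℝ² in general position, and let U be an upper convex transversal of 𝓡 that visits k regions. Then there exists an upper convex transversal U′ of 𝓡 that visits exactly the same k regions of 𝓡 as U, and such that the leftmost vertex, the rightmost vertex, and every strictly convex vertex of U′ is the bottom endpoint of a segment of 𝓡. -/

import Mathlib

/-- A closed vertical line segment in the plane, with abscissa `x` and ordinates
ranging over `[lo, hi]`. -/
structure VSeg where
  x : ℝ
  lo : ℝ
  hi : ℝ
  le : lo ≤ hi

namespace VSeg

/-- The set of points of a vertical segment. -/
def carrier (s : VSeg) : Set (ℝ × ℝ) := {p | p.1 = s.x ∧ s.lo ≤ p.2 ∧ p.2 ≤ s.hi}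

/-- The bottom endpoint of a vertical segment. -/
def bot (s : VSeg) : ℝ × ℝ := (s.x, s.lo)

/-- The top endpoint of a vertical segment. -/
def top (s : VSeg) : ℝ × ℝ := (s.x, s.hi)

end VSeg

/-- The set of all endpoints of the segments of `R`. -/
def endpointsOf (R : Finset VSeg) : Set (ℝ × ℝ) := ⋃ s ∈ R, {VSeg.bot s, VSeg.top s}

/-- General position: no three (distinct) segment endpoints are collinear. -/
def GenPos (R : Finset VSeg) : Prop :=
  ∀ p q r : ℝ × ℝ, p ∈ endpointsOf R → q ∈ endpointsOf R → r ∈ endpointsOf R →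
    p ≠ q → p ≠ r → q ≠ r → ¬ Collinear ℝ ({p, q, r} : Set (ℝ × ℝ))

/-- The slope of the line through two points (with distinct abscissae). -/
noncomputable def ptSlope (a b : ℝ × ℝ) : ℝ := (b.2 - a.2) / (b.1 - a.1)

/-- An upper convex transversal of `R` with `k` points: a weakly concave chain
`pts 0, …, pts (k-1)` with strictly increasing `x`-coordinates and non-increasing
consecutive edge slopes, together with an injective assignment `seg` of each point
to a segment of `R` containing it. -/
structure UpperTransversal (R : Finset VSeg) (k : ℕ) where
  pts : Fin k → ℝ × ℝ
  seg : Fin k → VSeg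
  seg_mem : ∀ i, seg i ∈ R
  seg_inj : Function.Injective seg
  pt_mem : ∀ i, pts i ∈ (seg i).carrier
  x_mono : StrictMono fun i => (pts i).1
  concave : ∀ i : ℕ, ∀ h : i + 2 < k,
    ptSlope (pts ⟨i, by omega⟩) (pts ⟨i + 1, by omega⟩) ≥
      ptSlope (pts ⟨i + 1, by omega⟩) (pts ⟨i + 2, h⟩)

namespace UTCanon

lemma slope_iff {a b c : ℝ × ℝ} (h1 : a.1 < b.1) (h2 : b.1 < c.1) :
    ptSlope a b ≥ ptSlope b c ↔
      (b.1 - a.1) * c.2 + (c.1 - b.1) * a.2 ≤ (c.1 - a.1) * b.2 := by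
  unfold ptSlope
  rw [ge_iff_le, div_le_div_iff₀ (by linarith) (by linarith)]
  constructor <;> intro h <;> nlinarith [h]

lemma collinear_of (x0 x1 x2 y0 y1 y2 : ℝ) (h01 : x0 < x1) (h12 : x1 < x2)
    (h : (x1 - x0) * y2 + (x2 - x1) * y0 = (x2 - x0) * y1) :
    Collinear ℝ ({(x0, y0), (x1, y1), (x2, y2)} : Set (ℝ × ℝ)) := by
  rw [collinear_iff_of_mem (Set.mem_insert _ _)]
  refine ⟨(x2 - x0, y2 - y0), ?_⟩
  intro p hp
  have hx : x2 - x0 ≠ 0 := by linarith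
  simp only [Set.mem_insert_iff, Set.mem_singleton_iff] at hp
  rcases hp with rfl | rfl | rfl
  · exact ⟨0, by simp⟩
  · refine ⟨(x1 - x0) / (x2 - x0), ?_⟩
    have e1 : (x1 - x0) / (x2 - x0) * (x2 - x0) + x0 = x1 := by field_simp; ring
    have e2 : (x1 - x0) / (x2 - x0) * (y2 - y0) + y0 = y1 := by
      rw [div_mul_eq_mul_div, div_add' _ _ _ hx, div_eq_iff hx]; ring_nf; nlinarith [h]
    show (x1, y1) = ((x1 - x0) / (x2 - x0) * (x2 - x0) + x0,
      (x1 - x0) / (x2 - x0) * (y2 - y0) + y0)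
    rw [e1, e2]
  · exact ⟨1, by simp⟩

variable {k : ℕ}

def Feas (x lo hi : Fin k → ℝ) (y : Fin k → ℝ) : Prop :=
  (∀ i, lo i ≤ y i ∧ y i ≤ hi i) ∧
  ∀ j : ℕ, ∀ h : j + 2 < k,
    (x ⟨j + 1, by omega⟩ - x ⟨j, by omega⟩) * y ⟨j + 2, h⟩
      + (x ⟨j + 2, h⟩ - x ⟨j + 1, by omega⟩) * y ⟨j, by omega⟩
      ≤ (x ⟨j + 2, h⟩ - x ⟨j, by omega⟩) * y ⟨j + 1, by omega⟩

noncomputable def Ystar (x lo hi : Fin k → ℝ) (i : Fin k) : ℝ :=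
  sInf ((fun y => y i) '' {y | Feas x lo hi y})

variable {x lo hi : Fin k → ℝ}

lemma bdd (i : Fin k) : BddBelow ((fun y => y i) '' {y | Feas x lo hi y}) :=
  ⟨lo i, by rintro t ⟨y, hy, rfl⟩; exact (hy.1 i).1⟩

lemma Ystar_le {y : Fin k → ℝ} (hy : Feas x lo hi y) (i : Fin k) :
    Ystar x lo hi i ≤ y i := csInf_le (bdd i) ⟨y, hy, rfl⟩

lemma lo_le_Ystar {y0 : Fin k → ℝ} (h0 : Feas x lo hi y0) (i : Fin k) :
    lo i ≤ Ystar x lo hi i :=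
  le_csInf ⟨y0 i, y0, h0, rfl⟩ (by rintro t ⟨y, hy, rfl⟩; exact (hy.1 i).1)

lemma Ystar_feas (hx : StrictMono x) {y0 : Fin k → ℝ} (h0 : Feas x lo hi y0) :
    Feas x lo hi (Ystar x lo hi) := by
  refine ⟨fun i => ⟨lo_le_Ystar h0 i, (Ystar_le h0 i).trans (h0.1 i).2⟩, ?_⟩
  intro j h
  have hab : x ⟨j, by omega⟩ < x ⟨j + 1, by omega⟩ := hx (by simp [Fin.mk_lt_mk])
  have hbc : x ⟨j + 1, by omega⟩ < x ⟨j + 2, h⟩ := hx (by simp [Fin.mk_lt_mk])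
  set Y := Ystar x lo hi with hYdef
  have key : ((x ⟨j + 1, by omega⟩ - x ⟨j, by omega⟩) * Y ⟨j + 2, h⟩
      + (x ⟨j + 2, h⟩ - x ⟨j + 1, by omega⟩) * Y ⟨j, by omega⟩)
      / (x ⟨j + 2, h⟩ - x ⟨j, by omega⟩) ≤ Y ⟨j + 1, by omega⟩ := by
    refine le_csInf ⟨y0 _, y0, h0, rfl⟩ ?_
    rintro t ⟨y, hy, rfl⟩
    rw [div_le_iff₀ (by linarith)]
    have h1 : (x ⟨j + 1, by omega⟩ - x ⟨j, by omega⟩) * y ⟨j + 2, h⟩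
        + (x ⟨j + 2, h⟩ - x ⟨j + 1, by omega⟩) * y ⟨j, by omega⟩
        ≤ (x ⟨j + 2, h⟩ - x ⟨j, by omega⟩) * y ⟨j + 1, by omega⟩ := hy.2 j h
    have h2 : Y ⟨j + 2, h⟩ ≤ y ⟨j + 2, h⟩ := Ystar_le hy _
    have h3 : Y ⟨j, by omega⟩ ≤ y ⟨j, by omega⟩ := Ystar_le hy _
    nlinarith [h1, h2, h3]
  rw [div_le_iff₀ (by linarith)] at key
  linarith [key]

lemma update_feas {Y : Fin k → ℝ} (hY : Feas x lo hi Y) (hx : StrictMono x)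
    (i : Fin k) (v : ℝ) (hv1 : lo i ≤ v) (hv2 : v ≤ Y i)
    (hd : ∀ j : ℕ, ∀ h : j + 2 < k, (⟨j + 1, by omega⟩ : Fin k) = i →
      (x ⟨j + 1, by omega⟩ - x ⟨j, by omega⟩) * Y ⟨j + 2, h⟩
        + (x ⟨j + 2, h⟩ - x ⟨j + 1, by omega⟩) * Y ⟨j, by omega⟩
        ≤ (x ⟨j + 2, h⟩ - x ⟨j, by omega⟩) * v) :
    Feas x lo hi (Function.update Y i v) := by
  have hle : ∀ m, Function.update Y i v m ≤ Y m := by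
    intro m
    rcases eq_or_ne m i with rfl | hm
    · simpa using hv2
    · rw [Function.update_of_ne hm]
  refine ⟨fun m => ?_, fun j h => ?_⟩
  · rcases eq_or_ne m i with rfl | hm
    · simp only [Function.update_self]
      exact ⟨hv1, hv2.trans (hY.1 m).2⟩
    · rw [Function.update_of_ne hm]; exact hY.1 m
  · have hab : x ⟨j, by omega⟩ < x ⟨j + 1, by omega⟩ := hx (by simp [Fin.mk_lt_mk])
    have hbc : x ⟨j + 1, by omega⟩ < x ⟨j + 2, h⟩ := hx (by simp [Fin.mk_lt_mk])
    have e1 : (x ⟨j + 2, h⟩ - x ⟨j + 1, by omega⟩) * Function.update Y i v ⟨j, by omega⟩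
        ≤ (x ⟨j + 2, h⟩ - x ⟨j + 1, by omega⟩) * Y ⟨j, by omega⟩ :=
      mul_le_mul_of_nonneg_left (hle _) (by linarith)
    have e2 : (x ⟨j + 1, by omega⟩ - x ⟨j, by omega⟩) * Function.update Y i v ⟨j + 2, h⟩
        ≤ (x ⟨j + 1, by omega⟩ - x ⟨j, by omega⟩) * Y ⟨j + 2, h⟩ :=
      mul_le_mul_of_nonneg_left (hle _) (by linarith)
    rcases eq_or_ne (⟨j + 1, by omega⟩ : Fin k) i with hji | hji
    · have hub : Function.update Y i v ⟨j + 1, by omega⟩ = v := by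
        rw [hji, Function.update_self]
      rw [hub]
      exact le_trans (by linarith [e1, e2]) (hd j h hji)
    · rw [Function.update_of_ne hji]
      exact le_trans (by linarith [e1, e2]) (hY.2 j h)

end UTCanon


/-- for any upper convex transversal `U` of a set `R` of vertical
segments in general position, there is an upper convex transversal `U'` visiting
exactly the same segments, whose leftmost vertex, rightmost vertex, and strictly
convex vertices all are bottom endpoints of segments of `R`. -/
theorem upper_transversal_canonical
    (R : Finset VSeg) (hgen : GenPos R) (k : ℕ) (U : UpperTransversal R k) :
    ∃ U' : UpperTransversal R k,
      Set.range U'.seg = Set.range U.seg ∧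
      (∀ h : 0 < k, ∃ s ∈ R, U'.pts ⟨0, h⟩ = s.bot) ∧
      (∀ h : 0 < k, ∃ s ∈ R, U'.pts ⟨k - 1, by omega⟩ = s.bot) ∧
      (∀ i : ℕ, ∀ h0 : 0 < i, ∀ h1 : i + 1 < k,
        ¬ Collinear ℝ ({U'.pts ⟨i - 1, by omega⟩, U'.pts ⟨i, by omega⟩,
            U'.pts ⟨i + 1, h1⟩} : Set (ℝ × ℝ)) →
        ∃ s ∈ R, U'.pts ⟨i, by omega⟩ = s.bot) := by
  classical
  set X : Fin k → ℝ := fun i => (U.seg i).x with hXdef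
  set L : Fin k → ℝ := fun i => (U.seg i).lo with hLdef
  set H : Fin k → ℝ := fun i => (U.seg i).hi with hHdef
  have hXpts : ∀ i, (U.pts i).1 = X i := fun i => (U.pt_mem i).1
  have hXmono : StrictMono X := by
    intro a b hab
    rw [← hXpts a, ← hXpts b]
    exact U.x_mono hab
  have h0 : UTCanon.Feas X L H fun i => (U.pts i).2 := by
    constructor
    · intro i; exact (U.pt_mem i).2
    · intro j h
      have hab : (U.pts ⟨j, by omega⟩).1 < (U.pts ⟨j + 1, by omega⟩).1 :=
        U.x_mono (by simp [Fin.mk_lt_mk])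
      have hbc : (U.pts ⟨j + 1, by omega⟩).1 < (U.pts ⟨j + 2, h⟩).1 :=
        U.x_mono (by simp [Fin.mk_lt_mk])
      have key := (UTCanon.slope_iff hab hbc).mp (U.concave j h)
      simp only [hXpts] at key
      exact key
  set Y := UTCanon.Ystar X L H with hYdef
  have hYf : UTCanon.Feas X L H Y := UTCanon.Ystar_feas hXmono h0
  have hLY : ∀ i, L i ≤ Y i := fun i => (hYf.1 i).1
  have hmin : ∀ (i : Fin k) (v : ℝ), L i ≤ v → v ≤ Y i →
      (∀ j : ℕ, ∀ h : j + 2 < k, (⟨j + 1, by omega⟩ : Fin k) = i →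
        (X ⟨j + 1, by omega⟩ - X ⟨j, by omega⟩) * Y ⟨j + 2, h⟩
          + (X ⟨j + 2, h⟩ - X ⟨j + 1, by omega⟩) * Y ⟨j, by omega⟩
          ≤ (X ⟨j + 2, h⟩ - X ⟨j, by omega⟩) * v) → Y i ≤ v := by
    intro i v h1 h2 h3
    have := UTCanon.Ystar_le (UTCanon.update_feas hYf hXmono i v h1 h2 h3) i
    rwa [Function.update_self] at this
  refine ⟨⟨fun i => (X i, Y i), U.seg, U.seg_mem, U.seg_inj,
      fun i => ⟨rfl, (hYf.1 i).1, (hYf.1 i).2⟩, hXmono, ?_⟩, rfl, ?_, ?_, ?_⟩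
  · intro j h
    have hab : ((X ⟨j, by omega⟩, Y ⟨j, by omega⟩) : ℝ × ℝ).1 <
        ((X ⟨j + 1, by omega⟩, Y ⟨j + 1, by omega⟩) : ℝ × ℝ).1 :=
      hXmono (by simp [Fin.mk_lt_mk])
    have hbc : ((X ⟨j + 1, by omega⟩, Y ⟨j + 1, by omega⟩) : ℝ × ℝ).1 <
        ((X ⟨j + 2, h⟩, Y ⟨j + 2, h⟩) : ℝ × ℝ).1 :=
      hXmono (by simp [Fin.mk_lt_mk])
    exact (UTCanon.slope_iff hab hbc).mpr (hYf.2 j h)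
  · intro h
    refine ⟨U.seg ⟨0, h⟩, U.seg_mem _, ?_⟩
    have hle : Y ⟨0, h⟩ ≤ L ⟨0, h⟩ := by
      refine hmin _ _ le_rfl (hLY _) ?_
      intro j hj hji
      exact absurd (congrArg Fin.val hji) (by simp)
    have heq : Y ⟨0, h⟩ = L ⟨0, h⟩ := le_antisymm hle (hLY _)
    show (X ⟨0, h⟩, Y ⟨0, h⟩) = _
    rw [heq]; rfl
  · intro h
    refine ⟨U.seg ⟨k - 1, by omega⟩, U.seg_mem _, ?_⟩
    have hle : Y ⟨k - 1, by omega⟩ ≤ L ⟨k - 1, by omega⟩ := by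
      refine hmin _ _ le_rfl (hLY _) ?_
      intro j hj hji
      have := congrArg Fin.val hji
      simp only [] at this
      omega
    have heq : Y ⟨k - 1, by omega⟩ = L ⟨k - 1, by omega⟩ := le_antisymm hle (hLY _)
    show (X ⟨k - 1, by omega⟩, Y ⟨k - 1, by omega⟩) = _
    rw [heq]; rfl
  · intro i hi0 hi1 hncol
    obtain ⟨j, rfl⟩ : ∃ j, i = j + 1 := ⟨i - 1, by omega⟩
    simp only [Nat.add_sub_cancel] at hncol
    have h : j + 2 < k := by omega
    set a : Fin k := ⟨j, by omega⟩ with hadef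
    set b : Fin k := ⟨j + 1, by omega⟩ with hbdef
    set c : Fin k := ⟨j + 2, h⟩ with hcdef
    have hab : X a < X b := hXmono (by simp [hadef, hbdef, Fin.mk_lt_mk])
    have hbc : X b < X c := hXmono (by simp [hbdef, hcdef, Fin.mk_lt_mk])
    have hconc : (X b - X a) * Y c + (X c - X b) * Y a ≤ (X c - X a) * Y b := hYf.2 j h
    have hne : (X b - X a) * Y c + (X c - X b) * Y a ≠ (X c - X a) * Y b := by
      intro heq
      exact hncol (UTCanon.collinear_of (X a) (X b) (X c) (Y a) (Y b) (Y c) hab hbc heq)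
    have hlt : (X b - X a) * Y c + (X c - X b) * Y a < (X c - X a) * Y b :=
      lt_of_le_of_ne hconc hne
    have hD : 0 < X c - X a := by linarith
    have havg : ((X b - X a) * Y c + (X c - X b) * Y a) / (X c - X a) < Y b := by
      rw [div_lt_iff₀ hD]
      linarith
    set v : ℝ := max (L b) (((X b - X a) * Y c + (X c - X b) * Y a) / (X c - X a))
      with hvdef
    have hYle : Y b ≤ v := by
      refine hmin b v (le_max_left _ _) (max_le (hLY _) havg.le) ?_
      intro j' h' hji
      have hjj : j' = j := by
        have := congrArg Fin.val hji
        simp only [hbdef] at this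
        omega
      subst hjj
      have h1 : ((X b - X a) * Y c + (X c - X b) * Y a) / (X c - X a) ≤ v :=
        le_max_right _ _
      have h2 := mul_le_mul_of_nonneg_right h1 hD.le
      rw [div_mul_cancel₀ _ hD.ne'] at h2
      have hgoal : (X b - X a) * Y c + (X c - X b) * Y a ≤ (X c - X a) * v := by
        linarith
      exact hgoal
    have heq : Y b = L b := by
      rcases le_or_gt (((X b - X a) * Y c + (X c - X b) * Y a) / (X c - X a)) (L b)
        with hca | hca
      · exact le_antisymm (by rw [hvdef, max_eq_left hca] at hYle; exact hYle) (hLY _)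
      · exfalso
        rw [hvdef, max_eq_right hca.le] at hYle
        exact absurd hYle (not_le.mpr havg)
    refine ⟨U.seg b, U.seg_mem _, ?_⟩
    show (X b, Y b) = _
    rw [heq]; rfl
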